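/- Fix N ≥ 1 and d ≥ 1, equip Fin d → ℝ with the lexicographic linear order (Lex (Fin d → ℝ)), and let μ be Lebesgue measure on Fin N → (Fin d → ℝ). Then the open lexicographic chamber D := {x : Fin N → (Fin d → ℝ) | x is strictly increasing with respect to the lexicographic order, i.e., i < j implies x i <lex x j} is a measurable set which is a fundamental domain (MeasureTheory.IsFundamentalDomain) for the action of S_N on (Fin N → Fin d → ℝ, μ) given by σ • x = x ∘ σ⁻¹. -/

import Mathlib

open MeasureTheory

/-- The action of the symmetric group `S_N` on tuples: `σ • x = x ∘ σ⁻¹`. -/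
instance permFunMulAction (N : ℕ) (X : Type*) : MulAction (Equiv.Perm (Fin N)) (Fin N → X) where
  smul σ x := x ∘ ⇑σ⁻¹
  one_smul x := by
    funext i
    simp [HSMul.hSMul]
  mul_smul σ τ x := by
    funext i
    simp [HSMul.hSMul, mul_inv_rev, Equiv.Perm.mul_apply]

lemma perm_smul_apply {N : ℕ} {X : Type*} (σ : Equiv.Perm (Fin N)) (x : Fin N → X) (i : Fin N) :
    (σ • x) i = x (σ⁻¹ i) := rfl

lemma toLex_lt_iff' {d : ℕ} (a b : Fin d → ℝ) :
    toLex a < toLex b ↔ ∃ k, (∀ l, l < k → a l = b l) ∧ a k < b k := Iff.rfl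

open Set in
/-- For `N ≥ 1` and `d ≥ 1`, the open lexicographic chamber, consisting of the tuples
`x : Fin N → (Fin d → ℝ)` that are strictly increasing with respect to the lexicographic
order on `Fin d → ℝ`, is a measurable set which is a fundamental domain for the action
`σ • x = x ∘ σ⁻¹` of `S_N` on `(Fin N → Fin d → ℝ, volume)`. -/
theorem stmt_14 (N d : ℕ) (hN : 1 ≤ N) (hd : 1 ≤ d) :
    MeasurableSet {x : Fin N → Fin d → ℝ | StrictMono fun i => toLex (x i)} ∧
    IsFundamentalDomain (Equiv.Perm (Fin N))
      {x : Fin N → Fin d → ℝ | StrictMono fun i => toLex (x i)}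
      (volume : Measure (Fin N → Fin d → ℝ)) := by
  set D := {x : Fin N → Fin d → ℝ | StrictMono fun i => toLex (x i)} with hD
  -- measurability of the chamber
  have hlt_meas : ∀ i j : Fin N,
      MeasurableSet {x : Fin N → Fin d → ℝ | toLex (x i) < toLex (x j)} := by
    intro i j
    have heq : {x : Fin N → Fin d → ℝ | toLex (x i) < toLex (x j)} =
        ⋃ k : Fin d, ((⋂ l ∈ Set.Iio k, {x : Fin N → Fin d → ℝ | x i l = x j l}) ∩
          {x : Fin N → Fin d → ℝ | x i k < x j k}) := by
      ext x
      simp only [mem_setOf_eq, mem_iUnion, mem_inter_iff, mem_iInter, mem_Iio, toLex_lt_iff']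
    rw [heq]
    refine MeasurableSet.iUnion fun k => MeasurableSet.inter ?_ ?_
    · refine MeasurableSet.biInter (Set.to_countable _) fun l _ => ?_
      exact measurableSet_eq_fun
        ((measurable_pi_apply l).comp (measurable_pi_apply i))
        ((measurable_pi_apply l).comp (measurable_pi_apply j))
    · exact measurableSet_lt
        ((measurable_pi_apply k).comp (measurable_pi_apply i))
        ((measurable_pi_apply k).comp (measurable_pi_apply j))
  have hDmeas : MeasurableSet D := by
    have heq : D = ⋂ (i : Fin N) (j : Fin N) (_ : i < j),
        {x : Fin N → Fin d → ℝ | toLex (x i) < toLex (x j)} := by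
      ext x
      simp only [hD, mem_setOf_eq, mem_iInter]
      exact ⟨fun h i j hij => h hij, fun h a b hab => h a b hab⟩
    rw [heq]
    exact MeasurableSet.iInter fun i => MeasurableSet.iInter fun j =>
      MeasurableSet.iInter fun _ => hlt_meas i j
  -- the bad set where two coordinates coincide is null
  have hnull : ∀ i j : Fin N, i ≠ j →
      volume {x : Fin N → Fin d → ℝ | x i = x j} = 0 := by
    intro i j hij
    have heq : {x : Fin N → Fin d → ℝ | x i = x j} =
        (LinearMap.ker ((LinearMap.proj i : (Fin N → Fin d → ℝ) →ₗ[ℝ] (Fin d → ℝ)) -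
          LinearMap.proj j) : Set (Fin N → Fin d → ℝ)) := by
      ext x
      simp [LinearMap.mem_ker, sub_eq_zero]
    rw [heq]
    refine Measure.addHaar_submodule _ _ ?_
    intro htop
    have hx0 : (fun k : Fin N => if k = i then (fun _ : Fin d => (1 : ℝ)) else 0) ∈
        LinearMap.ker ((LinearMap.proj i : (Fin N → Fin d → ℝ) →ₗ[ℝ] (Fin d → ℝ)) -
          LinearMap.proj j) := htop ▸ Submodule.mem_top
    simp only [LinearMap.mem_ker, LinearMap.sub_apply, LinearMap.proj_apply, sub_eq_zero] at hx0
    rw [if_pos trivial, if_neg (Ne.symm hij)] at hx0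
    exact one_ne_zero (congrFun hx0 ⟨0, hd⟩)
  set bad : Set (Fin N → Fin d → ℝ) :=
    ⋃ (i : Fin N) (j : Fin N) (_ : i ≠ j), {x : Fin N → Fin d → ℝ | x i = x j} with hbad
  have hbadnull : volume bad = 0 := by
    rw [hbad]
    refine measure_iUnion_null fun i => measure_iUnion_null fun j => measure_iUnion_null fun h =>
      hnull i j h
  have hinj : ∀ x : Fin N → Fin d → ℝ, x ∉ bad → Function.Injective x := by
    intro x hx a b hab
    by_contra hne
    exact hx (Set.mem_iUnion.2 ⟨a, Set.mem_iUnion.2 ⟨b, Set.mem_iUnion.2 ⟨hne, hab⟩⟩⟩)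
  refine ⟨hDmeas, ?_, ?_, ?_⟩
  · exact hDmeas.nullMeasurableSet
  · -- a.e. covering
    refine ae_iff.2 (measure_mono_null ?_ hbadnull)
    intro x hx
    by_contra hxbad
    apply hx
    have hxinj : Function.Injective x := hinj x hxbad
    haveI hwf : WellFoundedLT (Fin d) := Finite.to_wellFoundedLT
    letI : LinearOrder (Lex (Fin d → ℝ)) :=
      @linearOrderOfSTO _ (· < ·)
        { trichotomous := (Pi.isTrichotomous_lex _ _ IsWellFounded.wf).1 } (Classical.decRel _)
    set f : Fin N → Lex (Fin d → ℝ) := fun i => toLex (x i) with hf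
    have hfinj : Function.Injective f := fun a b h => hxinj (by
      have := congrArg ofLex h; exact this)
    refine ⟨(Tuple.sort f)⁻¹, ?_⟩
    show ((Tuple.sort f)⁻¹ • x) ∈ {x : Fin N → Fin d → ℝ | StrictMono fun i => toLex (x i)}
    rw [Set.mem_setOf_eq]
    have heq2 : (fun i => toLex (((Tuple.sort f)⁻¹ • x) i)) = f ∘ ⇑(Tuple.sort f) := by
      funext i
      rw [perm_smul_apply, inv_inv]
      rfl
    rw [heq2]
    exact (Tuple.monotone_sort f).strictMono_of_injective
      (hfinj.comp (Tuple.sort f).injective)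
  · -- a.e. disjointness
    intro σ τ hστ
    refine measure_mono_null ?_ hbadnull
    rintro x ⟨hxσ, hxτ⟩
    by_contra hxbad
    apply hστ
    have hxinj : Function.Injective x := hinj x hxbad
    set f : Fin N → Lex (Fin d → ℝ) := fun i => toLex (x i) with hf
    obtain ⟨y, hy, hyx⟩ := hxσ
    obtain ⟨z, hz, hzx⟩ := hxτ
    have hyD : StrictMono fun i => toLex (x (σ i)) := by
      have : ∀ i, x (σ i) = y i := by
        intro i
        have h1 : (σ • y) (σ i) = x (σ i) := congrFun hyx (σ i)
        rw [perm_smul_apply, ← Equiv.Perm.mul_apply, inv_mul_cancel, Equiv.Perm.one_apply] at h1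
        exact h1.symm
      simpa only [this] using show StrictMono (fun i => toLex (y i)) from hy
    have hzD : StrictMono fun i => toLex (x (τ i)) := by
      have : ∀ i, x (τ i) = z i := by
        intro i
        have h1 : (τ • z) (τ i) = x (τ i) := congrFun hzx (τ i)
        rw [perm_smul_apply, ← Equiv.Perm.mul_apply, inv_mul_cancel, Equiv.Perm.one_apply] at h1
        exact h1.symm
      simpa only [this] using show StrictMono (fun i => toLex (z i)) from hz
    have huniq : f ∘ σ = f ∘ τ :=
      Tuple.unique_monotone (f := f) hyD.monotone hzD.monotone
    refine Equiv.ext fun i => ?_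
    have := congrFun huniq i
    simp only [Function.comp_apply, hf] at this
    exact hxinj (congrArg ofLex this)
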